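/- Let m > 1 be an integer, L > 0 and δ > 0. There exists a constant C > 0, depending only on m and L, with the following property. For every integer N ≥ 1 (J = 2N, h = L/N, x_j = jh, y_k = kh), every τ ≥ 0, and every a : ℤ × ℤ → ℂ with |u|_m² := Σ_{(p,q)∈ℤ²} (p² + q²)^m |a_{pq}|² < ∞, define λ_{pq} = π²(p²+q²)/L² − δ(π²(p²+q²)/L²)², u(x,y) = Σ_{p,q∈ℤ} a_{pq} e^{iπ(px+qy)/L}, the exact evolved grid values w_{j,k} = Σ_{p,q∈ℤ} e^{λ_{pq}τ} a_{pq} e^{iπ(p x_j + q y_k)/L}, the discrete coefficients ũ_{pq} = (1/(J² c_p c_q)) Σ_{j,k=1}^{J} u(x_j,y_k) e^{−iπ(p x_j + q y_k)/L} for −N ≤ p,q ≤ N (c_r = 2 if |r| = N, c_r = 1 if |r| < N), and the pseudo-spectral evolved grid values w̃_{j,k} = Σ_{p=−N}^{N} Σ_{q=−N}^{N} e^{λ_{pq}τ} ũ_{pq} e^{iπ(p x_j + q y_k)/L}. Then h² Σ_{j,k=1}^{J} |w_{j,k} − w̃_{j,k}|² ≤ C² e^{τ/(2δ)} N^{−2m}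 |u|_m², i.e. the discrete L²-error is at most C |u|_m e^{τ/(4δ)} N^{−m}. -/

import Mathlib

open Complex Finset




noncomputable def ee (N : ℕ) (t : ℤ) : ℂ := Complex.exp (Real.pi * Complex.I * t / N)

lemma ee_ne_zero (N : ℕ) (t : ℤ) : ee N t ≠ 0 := Complex.exp_ne_zero _

lemma ee_add (N : ℕ) (s t : ℤ) : ee N (s + t) = ee N s * ee N t := by
  rw [ee, ee, ee, ← Complex.exp_add]; congr 1; push_cast; ring

lemma ee_zero (N : ℕ) : ee N 0 = 1 := by simp [ee]

lemma ee_conj (N : ℕ) (t : ℤ) : (starRingEnd ℂ) (ee N t) = ee N (-t) := by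
  rw [ee, ee, ← Complex.exp_conj]; congr 1
  simp [map_div₀, map_mul]

lemma ee_int_mul (N : ℕ) (r j : ℤ) : ee N (r * j) = ee N r ^ j := by
  rw [ee, ee, ← Complex.exp_int_mul]; congr 1; push_cast; ring

lemma ee_mul_two_N (N : ℕ) (hN : 0 < N) (s : ℤ) : ee N (2 * N * s) = 1 := by
  have hN' : (N:ℂ) ≠ 0 := Nat.cast_ne_zero.mpr hN.ne'
  have : (Real.pi : ℂ) * Complex.I * ((2 * (N:ℤ) * s : ℤ) : ℂ) / N
      = ↑s * (2 * Real.pi * Complex.I) := by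
    field_simp
    push_cast
    ring
  rw [ee, this, Complex.exp_int_mul, Complex.exp_two_pi_mul_I, one_zpow]

lemma ee_period (N : ℕ) (hN : 0 < N) (t s : ℤ) : ee N (t + 2 * N * s) = ee N t := by
  rw [ee_add, ee_mul_two_N N hN, mul_one]

def embNat1 : ℕ ↪ ℤ := ⟨fun i => (i : ℤ) + 1, by intro a b h; simp only at h; omega⟩

lemma Icc_one_eq_map (J : ℕ) : Finset.Icc (1 : ℤ) (J : ℤ) = (Finset.range J).map embNat1 := by
  ext z
  simp only [Finset.mem_Icc, Finset.mem_map, Finset.mem_range, embNat1, Function.Embedding.coeFn_mk]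
  constructor
  · rintro ⟨h1, h2⟩
    refine ⟨(z - 1).toNat, by omega, by show ((z - 1).toNat : ℤ) + 1 = z; omega⟩
  · rintro ⟨i, hi, rfl⟩
    show 1 ≤ (i : ℤ) + 1 ∧ (i : ℤ) + 1 ≤ J
    constructor <;> omega

lemma ee_orth (N : ℕ) (hN : 0 < N) (r : ℤ) :
    ∑ j ∈ Finset.Icc (1 : ℤ) ((2 * N : ℕ) : ℤ), ee N (r * j)
      = if ((2 * N : ℕ) : ℤ) ∣ r then ((2 * N : ℕ) : ℂ) else 0 := by
  have hsum : ∑ j ∈ Finset.Icc (1 : ℤ) ((2 * N : ℕ) : ℤ), ee N (r * j)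
      = ∑ i ∈ Finset.range (2 * N), ee N r ^ ((i : ℤ) + 1) := by
    rw [Icc_one_eq_map, Finset.sum_map]
    refine Finset.sum_congr rfl fun i _ => ?_
    rw [ee_int_mul]; rfl
  rw [hsum]
  by_cases hdvd : ((2 * N : ℕ) : ℤ) ∣ r
  · obtain ⟨s, rfl⟩ := hdvd
    have h1 : ee N (((2 * N : ℕ) : ℤ) * s) = 1 := by
      rw [show (((2 * N : ℕ) : ℤ) * s) = 2 * N * s by push_cast; ring]
      exact ee_mul_two_N N hN s
    rw [if_pos ⟨s, rfl⟩, Finset.sum_congr rfl (fun i _ => by rw [h1, one_zpow])]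
    simp
  · have hω : ee N r ≠ 1 := by
      intro hone
      rw [ee, Complex.exp_eq_one_iff] at hone
      obtain ⟨n, hn⟩ := hone
      apply hdvd
      refine ⟨n, ?_⟩
      have hN' : (N:ℂ) ≠ 0 := Nat.cast_ne_zero.mpr hN.ne'
      have hπ : (Real.pi:ℂ) ≠ 0 := by
        simpa using Complex.ofReal_ne_zero.mpr Real.pi_ne_zero
      have hI : Complex.I ≠ 0 := Complex.I_ne_zero
      field_simp at hn
      have : (r : ℂ) = ((2 * N : ℕ) : ℤ) * n := by
        push_cast
        have h2 : (Real.pi:ℂ) * Complex.I * r = (Real.pi:ℂ) * Complex.I * (2 * N * n) := by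
          rw [hn]; ring
        have h3 := mul_left_cancel₀ (mul_ne_zero hπ hI) h2
        rw [h3]
      exact_mod_cast this
    have hpow : ee N r ^ (2 * N) = 1 := by
      have := ee_int_mul N r (2 * N)
      rw [show (r * (2 * (N:ℤ))) = 2 * N * r by ring, ee_mul_two_N N hN] at this
      have h2 := this.symm
      rw [show ((2 * (N:ℤ)) : ℤ) = ((2 * N : ℕ) : ℤ) by push_cast; ring] at h2
      rw [zpow_natCast] at h2
      exact h2
    have : ∑ i ∈ Finset.range (2 * N), ee N r ^ ((i : ℤ) + 1)
        = ee N r * ∑ i ∈ Finset.range (2 * N), ee N r ^ i := by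
      rw [Finset.mul_sum]
      refine Finset.sum_congr rfl fun i _ => ?_
      rw [zpow_add₀ (ee_ne_zero N r), zpow_natCast, zpow_one]
      ring
    rw [this, geom_sum_eq hω, hpow, if_neg hdvd]
    simp

lemma ee_sub_orth (N : ℕ) (hN : 0 < N) (p p' : ℤ)
    (hp : p ∈ Finset.Ico (-(N:ℤ)) (N:ℤ)) (hp' : p' ∈ Finset.Ico (-(N:ℤ)) (N:ℤ)) :
    ∑ j ∈ Finset.Icc (1 : ℤ) ((2 * N : ℕ) : ℤ), ee N ((p - p') * j)
      = if p' = p then ((2 * N : ℕ) : ℂ) else 0 := by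
  rw [ee_orth N hN]
  simp only [Finset.mem_Ico] at hp hp'
  by_cases h : p' = p
  · subst h; simp
  · rw [if_neg, if_neg h]
    rintro ⟨s, hs⟩
    have h2 : p - p' = 2*(N:ℤ)*s := by push_cast at hs; linarith
    rcases lt_trichotomy s 0 with h1 | h1 | h1
    · nlinarith
    · subst h1; simp at h2; omega
    · nlinarith

/-- Discrete Parseval identity on the grid. -/
lemma parseval (N : ℕ) (hN : 0 < N) (D : ℤ → ℤ → ℂ) :
    ∑ j ∈ Finset.Icc (1 : ℤ) ((2 * N : ℕ) : ℤ), ∑ k ∈ Finset.Icc (1 : ℤ) ((2 * N : ℕ) : ℤ),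
        ‖∑ p ∈ Finset.Ico (-(N:ℤ)) (N:ℤ), ∑ q ∈ Finset.Ico (-(N:ℤ)) (N:ℤ),
            D p q * ee N (p * j + q * k)‖ ^ 2
      = ((2 * N : ℕ) : ℝ) ^ 2 * ∑ p ∈ Finset.Ico (-(N:ℤ)) (N:ℤ),
          ∑ q ∈ Finset.Ico (-(N:ℤ)) (N:ℤ), ‖D p q‖ ^ 2 := by
  classical
  set R : Finset ℤ := Finset.Ico (-(N:ℤ)) (N:ℤ) with hR
  set G : Finset ℤ := Finset.Icc (1 : ℤ) ((2 * N : ℕ) : ℤ) with hG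
  have key : ∑ z ∈ G ×ˢ G, (∑ P ∈ R ×ˢ R, D P.1 P.2 * ee N (P.1 * z.1 + P.2 * z.2)) *
        (starRingEnd ℂ) (∑ P ∈ R ×ˢ R, D P.1 P.2 * ee N (P.1 * z.1 + P.2 * z.2))
      = ((2 * N : ℕ) : ℂ) ^ 2 * ∑ P ∈ R ×ˢ R, D P.1 P.2 * (starRingEnd ℂ) (D P.1 P.2) := by
    have expand : ∀ z ∈ G ×ˢ G,
        (∑ P ∈ R ×ˢ R, D P.1 P.2 * ee N (P.1 * z.1 + P.2 * z.2)) *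
          (starRingEnd ℂ) (∑ P ∈ R ×ˢ R, D P.1 P.2 * ee N (P.1 * z.1 + P.2 * z.2))
        = ∑ P ∈ R ×ˢ R, ∑ Q ∈ R ×ˢ R, (D P.1 P.2 * (starRingEnd ℂ) (D Q.1 Q.2))
            * ee N ((P.1 - Q.1) * z.1 + (P.2 - Q.2) * z.2) := by
      intro z _
      rw [map_sum, Finset.sum_mul_sum]
      refine Finset.sum_congr rfl fun P _ => Finset.sum_congr rfl fun Q _ => ?_
      rw [map_mul, ee_conj, mul_mul_mul_comm]
      congr 1
      rw [← ee_add]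
      congr 1
      ring
    rw [Finset.sum_congr rfl expand, Finset.sum_comm]
    have inner : ∀ P ∈ R ×ˢ R, ∑ z ∈ G ×ˢ G, ∑ Q ∈ R ×ˢ R,
        (D P.1 P.2 * (starRingEnd ℂ) (D Q.1 Q.2))
            * ee N ((P.1 - Q.1) * z.1 + (P.2 - Q.2) * z.2)
        = ((2 * N : ℕ) : ℂ) ^ 2 * (D P.1 P.2 * (starRingEnd ℂ) (D P.1 P.2)) := by
      intro P hP
      rw [Finset.sum_comm]
      have hP1 : P.1 ∈ R := (Finset.mem_product.mp hP).1
      have hP2 : P.2 ∈ R := (Finset.mem_product.mp hP).2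
      have step : ∀ Q ∈ R ×ˢ R, ∑ z ∈ G ×ˢ G,
          (D P.1 P.2 * (starRingEnd ℂ) (D Q.1 Q.2))
              * ee N ((P.1 - Q.1) * z.1 + (P.2 - Q.2) * z.2)
          = (D P.1 P.2 * (starRingEnd ℂ) (D Q.1 Q.2)) *
            ((if Q.1 = P.1 then ((2 * N : ℕ) : ℂ) else 0) *
             (if Q.2 = P.2 then ((2 * N : ℕ) : ℂ) else 0)) := by
        intro Q hQ
        have hQ1 : Q.1 ∈ R := (Finset.mem_product.mp hQ).1
        have hQ2 : Q.2 ∈ R := (Finset.mem_product.mp hQ).2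
        rw [← Finset.mul_sum]
        congr 1
        rw [Finset.sum_product]
        have split : ∀ j k : ℤ, ee N ((P.1 - Q.1) * j + (P.2 - Q.2) * k)
            = ee N ((P.1 - Q.1) * j) * ee N ((P.2 - Q.2) * k) := fun j k => ee_add N _ _
        calc ∑ j ∈ G, ∑ k ∈ G, ee N ((P.1 - Q.1) * j + (P.2 - Q.2) * k)
            = (∑ j ∈ G, ee N ((P.1 - Q.1) * j)) * (∑ k ∈ G, ee N ((P.2 - Q.2) * k)) := by
              rw [Finset.sum_mul_sum]
              exact Finset.sum_congr rfl fun j _ => Finset.sum_congr rfl fun k _ => split j k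
          _ = _ := by rw [ee_sub_orth N hN P.1 Q.1 hP1 hQ1, ee_sub_orth N hN P.2 Q.2 hP2 hQ2]
      rw [Finset.sum_congr rfl step]
      have : ∀ Q ∈ R ×ˢ R, (D P.1 P.2 * (starRingEnd ℂ) (D Q.1 Q.2)) *
            ((if Q.1 = P.1 then ((2 * N : ℕ) : ℂ) else 0) *
             (if Q.2 = P.2 then ((2 * N : ℕ) : ℂ) else 0))
          = if Q = P then ((2 * N : ℕ) : ℂ)^2 * (D P.1 P.2 * (starRingEnd ℂ) (D P.1 P.2)) else 0 := by
        intro Q hQ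
        by_cases h1 : Q = P
        · subst h1; rw [if_pos rfl, if_pos rfl, if_pos rfl]; ring
        · by_cases h2 : Q.1 = P.1
          · have h3 : ¬ Q.2 = P.2 := by
              intro h4; exact h1 (Prod.ext h2 h4)
            simp [h1, h2, h3]
          · simp [h1, h2]
      rw [Finset.sum_congr rfl this, Finset.sum_ite_eq' (R ×ˢ R) P _, if_pos hP]
    rw [Finset.sum_congr rfl inner, ← Finset.mul_sum]
  -- transfer to ℝ
  have lhs_eq : Complex.re (∑ z ∈ G ×ˢ G, (∑ P ∈ R ×ˢ R, D P.1 P.2 * ee N (P.1 * z.1 + P.2 * z.2)) *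
        (starRingEnd ℂ) (∑ P ∈ R ×ˢ R, D P.1 P.2 * ee N (P.1 * z.1 + P.2 * z.2)))
      = ∑ j ∈ G, ∑ k ∈ G, (‖∑ p ∈ R, ∑ q ∈ R, D p q * ee N (p * j + q * k)‖ ^ 2 : ℝ) := by
    rw [Complex.re_sum, Finset.sum_product]
    refine Finset.sum_congr rfl fun j _ => Finset.sum_congr rfl fun k _ => ?_
    rw [Complex.mul_conj, Complex.ofReal_re, Complex.normSq_eq_norm_sq,
      Finset.sum_product]
  have rhs_eq : (∑ P ∈ R ×ˢ R, D P.1 P.2 * (starRingEnd ℂ) (D P.1 P.2))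
      = (((∑ p ∈ R, ∑ q ∈ R, (‖D p q‖ ^ 2 : ℝ)) : ℝ) : ℂ) := by
    rw [Finset.sum_product]
    push_cast
    refine Finset.sum_congr rfl fun p _ => Finset.sum_congr rfl fun q _ => ?_
    rw [Complex.mul_conj, Complex.normSq_eq_norm_sq]
    push_cast
    ring
  rw [← lhs_eq, key, rhs_eq]
  rw [show (((2 * N : ℕ) : ℂ))^2 * (((∑ p ∈ R, ∑ q ∈ R, (‖D p q‖ ^ 2 : ℝ)) : ℝ) : ℂ)
      = ((((2 * N : ℕ) : ℝ)^2 * (∑ p ∈ R, ∑ q ∈ R, (‖D p q‖ ^ 2 : ℝ)) : ℝ) : ℂ) by push_cast; ring]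
  rw [Complex.ofReal_re]


variable {E : Type*} [AddCommGroup E] [UniformSpace E] [IsUniformAddGroup E]
  [CompleteSpace E] [T2Space E]

/-- The equivalence `(Ico (-N) N) × ℤ ≃ ℤ`, `(r, l) ↦ r + 2N·l`. -/
def resEquiv (N : ℕ) (hN : 0 < N) :
    ((Finset.Ico (-(N:ℤ)) (N:ℤ) : Finset ℤ) × ℤ) ≃ ℤ where
  toFun x := x.1.1 + 2 * N * x.2
  invFun P := (⟨(P + N) % (2 * N) - N, by
      have h1 : (0:ℤ) < 2 * N := by positivity
      have h2 := Int.emod_nonneg (P + N) h1.ne'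
      have h3 := Int.emod_lt_of_pos (P + N) h1
      simp only [Finset.mem_Ico]
      omega⟩, (P + N) / (2 * N))
  left_inv := by
    rintro ⟨⟨r, hr⟩, l⟩
    have h1 : (0:ℤ) < 2 * N := by positivity
    simp only [Finset.mem_Ico] at hr
    have hmod : (r + 2 * N * l + N) % (2 * N) = r + N := by
      rw [show r + 2 * ↑N * l + ↑N = r + ↑N + 2 * ↑N * l by ring]
      rw [Int.add_mul_emod_self_left]
      exact Int.emod_eq_of_lt (by omega) (by omega)
    have hdiv : (r + 2 * N * l + N) / (2 * N) = l := by
      rw [show r + 2 * ↑N * l + ↑N = r + ↑N + l * (2 * ↑N) by ring]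
      rw [Int.add_mul_ediv_right _ _ h1.ne']
      rw [Int.ediv_eq_zero_of_lt (by omega) (by omega)]
      ring
    ext
    · simp only [hmod]; ring
    · simpa using hdiv
  right_inv := by
    intro P
    have := Int.emod_add_mul_ediv (P + N) (2 * N)
    simp only []
    omega

lemma resEquiv_apply (N : ℕ) (hN : 0 < N)
    (r : (Finset.Ico (-(N:ℤ)) (N:ℤ) : Finset ℤ)) (l : ℤ) :
    resEquiv N hN (r, l) = (r : ℤ) + 2 * N * l := rfl

/-- Regrouping a summable family over `ℤ × ℤ` by residues mod `2N`. -/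
lemma tsum_regroup (N : ℕ) (hN : 0 < N) (f : ℤ × ℤ → E) (hf : Summable f) :
    ∑' P : ℤ × ℤ, f P
      = ∑ p ∈ Finset.Ico (-(N:ℤ)) (N:ℤ), ∑ q ∈ Finset.Ico (-(N:ℤ)) (N:ℤ),
          ∑' ln : ℤ × ℤ, f (p + 2 * N * ln.1, q + 2 * N * ln.2) := by
  classical
  set R := (Finset.Ico (-(N:ℤ)) (N:ℤ)) with hR
  let E2 : ((R × ℤ) × (R × ℤ)) ≃ ℤ × ℤ :=
    Equiv.prodCongr (resEquiv N hN) (resEquiv N hN)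
  let E3 : ((R × R) × (ℤ × ℤ)) ≃ ((R × ℤ) × (R × ℤ)) := Equiv.prodProdProdComm R R ℤ ℤ
  let E4 := E3.trans E2
  have hE4 : ∀ rs : R × R, ∀ ln : ℤ × ℤ,
      E4 ((rs.1, rs.2), ln) = ((rs.1 : ℤ) + 2 * N * ln.1, (rs.2 : ℤ) + 2 * N * ln.2) := by
    intro rs ln; rfl
  have h1 : ∑' P : ℤ × ℤ, f P = ∑' x : (R × R) × (ℤ × ℤ), f (E4 x) := (E4.tsum_eq f).symm
  have hsumm : Summable fun x : (R × R) × (ℤ × ℤ) => f (E4 x) := (E4.summable_iff).mpr hf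
  have h2 : ∑' x : (R × R) × (ℤ × ℤ), f (E4 x)
      = ∑' rs : R × R, ∑' ln : ℤ × ℤ, f (E4 (rs, ln)) :=
    Summable.tsum_prod' hsumm (fun rs => hsumm.prod_factor rs)
  rw [h1, h2, tsum_fintype]
  rw [Fintype.sum_prod_type]
  rw [← Finset.sum_coe_sort (R) (fun p => ∑ q ∈ R, ∑' ln : ℤ × ℤ, f (p + 2*N*ln.1, q + 2*N*ln.2))]
  refine Finset.sum_congr rfl fun p _ => ?_
  rw [← Finset.sum_coe_sort (R) (fun q => ∑' ln : ℤ × ℤ, f ((p:ℤ) + 2*N*ln.1, q + 2*N*ln.2))]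
  refine Finset.sum_congr rfl fun q _ => ?_
  rfl


lemma summable_inv_sq_add_one : Summable (fun n : ℤ => (((n:ℝ)^2 + 1))⁻¹) := by
  have hnat : Summable (fun n : ℕ => (((n:ℝ)^2 + 1))⁻¹) := by
    have h1 : Summable (fun n : ℕ => 2 * (1 / ((n:ℝ) + 1)^2)) := by
      have := (summable_nat_add_iff 1).mpr ((Real.summable_one_div_nat_pow (p := 2)).mpr one_lt_two)
      push_cast at this
      exact this.mul_left 2
    refine h1.of_nonneg_of_le (fun n => by positivity) (fun n => ?_)
    rw [inv_eq_one_div, mul_one_div, div_le_div_iff₀ (by positivity) (by positivity)]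
    nlinarith [sq_nonneg ((n:ℝ) - 1)]
  refine Summable.of_nat_of_neg hnat ?_
  refine hnat.congr fun n => ?_
  push_cast
  ring_nf

lemma tsum_cauchy_schwarz {ι : Type*} (u v : ι → ℝ) (hu : ∀ i, 0 ≤ u i) (hv : ∀ i, 0 ≤ v i)
    (hu2 : Summable (fun i => u i ^ 2)) (hv2 : Summable (fun i => v i ^ 2)) :
    (∑' i, u i * v i) ^ 2 ≤ (∑' i, u i ^ 2) * (∑' i, v i ^ 2) := by
  have huv : Summable (fun i => u i * v i) := by
    refine Summable.of_nonneg_of_le (fun i => mul_nonneg (hu i) (hv i))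
      (fun i => ?_) ((hu2.add hv2).mul_left (1/2))
    nlinarith [sq_nonneg (u i - v i)]
  set A := ∑' i, u i ^ 2 with hA
  set B := ∑' i, v i ^ 2 with hB
  have hA0 : 0 ≤ A := tsum_nonneg (fun i => sq_nonneg _)
  have hB0 : 0 ≤ B := tsum_nonneg (fun i => sq_nonneg _)
  have key : ∑' i, u i * v i ≤ Real.sqrt (A * B) := by
    refine Summable.tsum_le_of_sum_le huv (fun s => ?_)
    have h1 : (∑ i ∈ s, u i * v i) ^ 2 ≤ (∑ i ∈ s, u i ^ 2) * (∑ i ∈ s, v i ^ 2) :=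
      Finset.sum_mul_sq_le_sq_mul_sq s u v
    have h2 : (∑ i ∈ s, u i ^ 2) ≤ A := Summable.sum_le_tsum s (fun i _ => sq_nonneg _) hu2
    have h3 : (∑ i ∈ s, v i ^ 2) ≤ B := Summable.sum_le_tsum s (fun i _ => sq_nonneg _) hv2
    have h4 : (∑ i ∈ s, u i * v i) ^ 2 ≤ A * B :=
      h1.trans (mul_le_mul h2 h3 (Finset.sum_nonneg fun i _ => sq_nonneg _) hA0)
    have h5 : 0 ≤ ∑ i ∈ s, u i * v i := Finset.sum_nonneg fun i _ => mul_nonneg (hu i) (hv i)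
    exact (Real.le_sqrt h5 (mul_nonneg hA0 hB0)).mpr h4
  calc (∑' i, u i * v i) ^ 2 ≤ Real.sqrt (A*B) ^ 2 :=
        pow_le_pow_left₀ (tsum_nonneg fun i => mul_nonneg (hu i) (hv i)) key 2
    _ = A * B := Real.sq_sqrt (mul_nonneg hA0 hB0)

lemma alias_sq_lb (N : ℕ) (p l : ℤ) (hp1 : -(N:ℤ) ≤ p) (hp2 : p ≤ N) :
    (N:ℤ)^2 * l^2 ≤ (p + 2*N*l)^2 := by
  have hN0 : (0:ℤ) ≤ N := Int.ofNat_nonneg N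
  rcases lt_trichotomy l 0 with hl | rfl | hl
  · have h1 : p + N*l ≤ 0 := by nlinarith
    have h2 : p + 3*N*l ≤ 0 := by nlinarith
    nlinarith
  · nlinarith
  · have h1 : 0 ≤ p + N*l := by nlinarith
    have h2 : 0 ≤ p + 3*N*l := by nlinarith
    nlinarith

lemma norm_ee (N : ℕ) (t : ℤ) : ‖ee N t‖ = 1 := by
  rw [ee, Complex.norm_exp]
  have : (Real.pi * Complex.I * t / N).re = 0 := by
    simp [Complex.div_re]
  rw [this, Real.exp_zero]

lemma summable_k0 (m : ℕ) (hm : 1 < m) :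
    Summable (fun ln : ℤ × ℤ => ((((ln.1:ℝ)^2 + (ln.2:ℝ)^2))^m)⁻¹) := by
  have hprod : Summable (fun ln : ℤ × ℤ => (9/4 : ℝ) *
      ((((ln.1:ℝ)^2+1))⁻¹ * (((ln.2:ℝ)^2+1))⁻¹)) :=
    ((summable_inv_sq_add_one.mul_of_nonneg summable_inv_sq_add_one
      (fun n => by positivity) (fun n => by positivity))).mul_left _
  refine hprod.of_nonneg_of_le (fun ln => by positivity) (fun ln => ?_)
  rcases eq_or_ne ln (0, 0) with h0 | h0
  · subst h0
    norm_num [zero_pow (show m ≠ 0 by omega)]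
  · set l := ln.1; set n := ln.2
    have hs1 : (1:ℝ) ≤ (l:ℝ)^2 + (n:ℝ)^2 := by
      have : l ≠ 0 ∨ n ≠ 0 := by
        by_contra hcon
        push_neg at hcon
        exact h0 (Prod.ext hcon.1 hcon.2)
      have h1 : (1:ℤ) ≤ l^2 + n^2 := by
        rcases this with h | h
        · nlinarith [sq_nonneg n, Int.one_le_abs h, _root_.sq_abs l, sq_nonneg (|l| - 1)]
        · nlinarith [sq_nonneg l, Int.one_le_abs h, _root_.sq_abs n, sq_nonneg (|n| - 1)]
      calc (1:ℝ) = ((1:ℤ):ℝ) := by norm_num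
        _ ≤ (((l^2 + n^2 : ℤ)):ℝ) := by exact_mod_cast h1
        _ = (l:ℝ)^2 + (n:ℝ)^2 := by push_cast; ring
    set s : ℝ := (l:ℝ)^2 + (n:ℝ)^2 with hsdef
    have h2 : s^2 ≤ s^m := pow_le_pow_right₀ hs1 hm
    have h3 : (4/9:ℝ) * (((l:ℝ)^2+1) * ((n:ℝ)^2+1)) ≤ s^2 := by
      have : ((l:ℝ)^2+1) * ((n:ℝ)^2+1) ≤ ((s+2)/2)^2 := by nlinarith [sq_nonneg ((l:ℝ)^2 - (n:ℝ)^2)]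
      nlinarith
    have h4 : (4/9:ℝ) * (((l:ℝ)^2+1) * ((n:ℝ)^2+1)) ≤ s^m := le_trans h3 h2
    have h5 : (0:ℝ) < (4/9:ℝ) * (((l:ℝ)^2+1) * ((n:ℝ)^2+1)) := by positivity
    calc (s^m)⁻¹ ≤ ((4/9:ℝ) * (((l:ℝ)^2+1) * ((n:ℝ)^2+1)))⁻¹ := by
          exact inv_anti₀ h5 h4
      _ = (9/4 : ℝ) * ((((l:ℝ)^2+1))⁻¹ * (((n:ℝ)^2+1))⁻¹) := by
          rw [mul_inv, mul_inv]; ring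

lemma collapse_sum (N : ℕ) (hN : 1 ≤ N) (c : ℤ → ℂ)
    (hc : ∀ r : ℤ, c r = if |r| = (N : ℤ) then 2 else 1) (g : ℤ → ℂ)
    (hsym : g (-(N:ℤ)) = g (N:ℤ)) :
    ∑ p ∈ Finset.Icc (-(N:ℤ)) (N:ℤ), (c p)⁻¹ * g p
      = ∑ p ∈ Finset.Ico (-(N:ℤ)) (N:ℤ), g p := by
  have hNN : -(N:ℤ) < N := by omega
  have h1 : Finset.Icc (-(N:ℤ)) (N:ℤ) = insert (N:ℤ) (Finset.Ico (-(N:ℤ)) (N:ℤ)) := by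
    ext z; simp only [Finset.mem_Icc, Finset.mem_insert, Finset.mem_Ico]; omega
  have h2 : Finset.Ico (-(N:ℤ)) (N:ℤ) = insert (-(N:ℤ)) (Finset.Ico (-(N:ℤ)+1) (N:ℤ)) := by
    ext z; simp only [Finset.mem_Ico, Finset.mem_insert]; omega
  have hNnotin : (N:ℤ) ∉ Finset.Ico (-(N:ℤ)) (N:ℤ) := by simp
  have hmNnotin : -(N:ℤ) ∉ Finset.Ico (-(N:ℤ)+1) (N:ℤ) := by
    simp only [Finset.mem_Ico]; omega
  have hcN : c (N:ℤ) = 2 := by rw [hc]; simp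
  have hcmN : c (-(N:ℤ)) = 2 := by rw [hc]; simp
  have hcin : ∀ p ∈ Finset.Ico (-(N:ℤ)+1) (N:ℤ), c p = 1 := by
    intro p hp
    simp only [Finset.mem_Ico] at hp
    rw [hc, if_neg]
    intro hab
    rcases abs_cases p with ⟨h,_⟩ | ⟨h,_⟩ <;> omega
  rw [h1, Finset.sum_insert hNnotin, h2, Finset.sum_insert hmNnotin,
    Finset.sum_insert hmNnotin, hcN, hcmN]
  have : ∑ p ∈ Finset.Ico (-(N:ℤ)+1) (N:ℤ), (c p)⁻¹ * g p
      = ∑ p ∈ Finset.Ico (-(N:ℤ)+1) (N:ℤ), g p := by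
    refine Finset.sum_congr rfl fun p hp => ?_
    rw [hcin p hp, inv_one, one_mul]
  rw [this, hsym]
  ring

lemma exp_lam_le (δ : ℝ) (hδ : 0 < δ) (τ : ℝ) (hτ : 0 ≤ τ) (s : ℝ) (hs : 0 ≤ s) :
    Real.exp ((s - δ * s^2) * τ) ≤ Real.exp (τ / (4*δ)) := by
  refine Real.exp_le_exp.mpr ?_
  have h1 : s - δ * s^2 ≤ 1/(4*δ) := by
    rw [le_div_iff₀ (by positivity)]
    nlinarith [sq_nonneg (2*δ*s - 1)]
  calc (s - δ*s^2) * τ ≤ (1/(4*δ)) * τ := mul_le_mul_of_nonneg_right h1 hτ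
    _ = τ / (4*δ) := by ring

lemma one_le_sq_sum (pq : ℤ × ℤ) (hpq : pq ≠ (0, 0)) :
    (1:ℝ) ≤ (pq.1:ℝ)^2 + (pq.2:ℝ)^2 := by
  have : pq.1 ≠ 0 ∨ pq.2 ≠ 0 := by
    by_contra hcon
    push_neg at hcon
    exact hpq (Prod.ext hcon.1 hcon.2)
  have h1 : (1:ℤ) ≤ pq.1^2 + pq.2^2 := by
    rcases this with hl | hl
    · nlinarith [sq_nonneg pq.2, Int.one_le_abs hl, _root_.sq_abs pq.1, sq_nonneg (|pq.1| - 1)]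
    · nlinarith [sq_nonneg pq.1, Int.one_le_abs hl, _root_.sq_abs pq.2, sq_nonneg (|pq.2| - 1)]
  calc (1:ℝ) = ((1:ℤ):ℝ) := by norm_num
    _ ≤ (((pq.1^2 + pq.2^2 : ℤ)):ℝ) := by exact_mod_cast h1
    _ = (pq.1:ℝ)^2 + (pq.2:ℝ)^2 := by push_cast; ring

set_option maxHeartbeats 1000000 in
/-- Lemma 3.4 of the paper: the discrete `L²`-error between the exactly evolved grid values
of the linear subproblem `u_t = −Δu − δΔ²u` and the pseudo-spectrally evolved grid values
is bounded by `C |u|_m e^{τ/(4δ)} N^{−m}`, with `C` depending only on `m` and `L`. -/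
theorem pseudo_spectral_error (m : ℕ) (hm : 1 < m) (L : ℝ) (hL : 0 < L) :
    ∃ C : ℝ, 0 < C ∧ ∀ δ : ℝ, 0 < δ → ∀ N : ℕ, 1 ≤ N → ∀ τ : ℝ, 0 ≤ τ →
      ∀ a : ℤ × ℤ → ℂ,
        Summable (fun pq : ℤ × ℤ => ((pq.1 : ℝ) ^ 2 + (pq.2 : ℝ) ^ 2) ^ m * ‖a pq‖ ^ 2) →
      ∀ h : ℝ, h = L / N →
      ∀ x : ℤ → ℝ, (∀ j : ℤ, x j = j * h) →
      ∀ lam : ℤ → ℤ → ℝ,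
        (∀ p q : ℤ, lam p q =
          Real.pi ^ 2 * ((p : ℝ) ^ 2 + (q : ℝ) ^ 2) / L ^ 2
            - δ * (Real.pi ^ 2 * ((p : ℝ) ^ 2 + (q : ℝ) ^ 2) / L ^ 2) ^ 2) →
      ∀ u : ℝ → ℝ → ℂ,
        (∀ X Y : ℝ, u X Y = ∑' p : ℤ, ∑' q : ℤ,
          a (p, q) * Complex.exp (Complex.I * Real.pi * ((p : ℂ) * X + (q : ℂ) * Y) / L)) →
      ∀ w : ℤ → ℤ → ℂ,
        (∀ j k : ℤ, w j k = ∑' p : ℤ, ∑' q : ℤ,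
          (Real.exp (lam p q * τ) : ℂ) * a (p, q)
            * Complex.exp (Complex.I * Real.pi * ((p : ℂ) * (x j : ℝ) + (q : ℂ) * (x k : ℝ)) / L)) →
      ∀ c : ℤ → ℂ, (∀ r : ℤ, c r = if |r| = (N : ℤ) then 2 else 1) →
      ∀ ut : ℤ → ℤ → ℂ,
        (∀ p q : ℤ, ut p q =
          (1 / (((2 * N : ℕ) : ℂ) ^ 2 * c p * c q)) *
            ∑ j ∈ Finset.Icc (1 : ℤ) (2 * N), ∑ k ∈ Finset.Icc (1 : ℤ) (2 * N),
              u (x j) (x k)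
                * Complex.exp (-(Complex.I * Real.pi
                    * ((p : ℂ) * (x j : ℝ) + (q : ℂ) * (x k : ℝ)) / L))) →
      ∀ wt : ℤ → ℤ → ℂ,
        (∀ j k : ℤ, wt j k =
          ∑ p ∈ Finset.Icc (-(N : ℤ)) (N : ℤ), ∑ q ∈ Finset.Icc (-(N : ℤ)) (N : ℤ),
            (Real.exp (lam p q * τ) : ℂ) * ut p q
              * Complex.exp (Complex.I * Real.pi * ((p : ℂ) * (x j : ℝ) + (q : ℂ) * (x k : ℝ)) / L)) →
      h ^ 2 * ∑ j ∈ Finset.Icc (1 : ℤ) (2 * N), ∑ k ∈ Finset.Icc (1 : ℤ) (2 * N),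
          ‖w j k - wt j k‖ ^ 2
        ≤ C ^ 2 * Real.exp (τ / (2 * δ))
            * (∑' pq : ℤ × ℤ, ((pq.1 : ℝ) ^ 2 + (pq.2 : ℝ) ^ 2) ^ m * ‖a pq‖ ^ 2)
            / (N : ℝ) ^ (2 * m) := by
  classical
  set K : ℝ := ∑' ln : ℤ × ℤ, ((((ln.1:ℝ)^2 + (ln.2:ℝ)^2))^m)⁻¹ with hKdef
  have hK0 : 0 ≤ K := tsum_nonneg fun ln => by positivity
  refine ⟨4 * L * Real.sqrt (K + 1), by positivity, ?_⟩
  intro δ hδ N hN τ hτ a ha h hh x hx lam hlam u hu w hw c hc ut hut wt hwt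
  have hN0 : 0 < N := hN
  have hNR : (0:ℝ) < N := by exact_mod_cast hN0
  have hNZ : (N:ℂ) ≠ 0 := Nat.cast_ne_zero.mpr hN0.ne'
  have hLZ : (L:ℂ) ≠ 0 := Complex.ofReal_ne_zero.mpr hL.ne'
  have hJcast : (2 * (N:ℤ)) = ((2*N : ℕ) : ℤ) := by push_cast; ring
  set R : Finset ℤ := Finset.Ico (-(N:ℤ)) (N:ℤ) with hRdef
  -- conversion of exponentials
  have hee : ∀ p q j k : ℤ,
      Complex.exp (Complex.I * Real.pi * ((p:ℂ) * ((x j : ℝ):ℂ) + (q:ℂ) * ((x k : ℝ):ℂ)) / L)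
        = ee N (p * j + q * k) := by
    intro p q j k
    rw [ee]
    congr 1
    rw [hx j, hx k, hh]
    push_cast
    field_simp
  have heeneg : ∀ p q j k : ℤ,
      Complex.exp (-(Complex.I * Real.pi * ((p:ℂ) * ((x j : ℝ):ℂ) + (q:ℂ) * ((x k : ℝ):ℂ)) / L))
        = ee N (-(p * j + q * k)) := by
    intro p q j k
    rw [ee]
    congr 1
    rw [hx j, hx k, hh]
    push_cast
    field_simp
  have hexp_le : ∀ p q : ℤ, Real.exp (lam p q * τ) ≤ Real.exp (τ / (4*δ)) := by
    intro p q
    rw [hlam]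
    exact exp_lam_le δ hδ τ hτ _ (by positivity)
  have hexp_pos : (0:ℝ) < Real.exp (τ / (4*δ)) := Real.exp_pos _
  -- summability of a
  have hsa : Summable (fun PQ : ℤ × ℤ => ‖a PQ‖) := by
    rw [← Finset.summable_compl_iff ({((0:ℤ),(0:ℤ))} : Finset (ℤ × ℤ))]
    have hbig : Summable (fun PQ : ℤ × ℤ =>
        ((((PQ.1:ℝ)^2 + (PQ.2:ℝ)^2))^m)⁻¹ + ((PQ.1:ℝ)^2 + (PQ.2:ℝ)^2)^m * ‖a PQ‖^2) :=
      (summable_k0 m hm).add ha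
    have hbig' := hbig.comp_injective
      (Subtype.val_injective (p := fun x => x ∉ ({((0:ℤ),(0:ℤ))} : Finset (ℤ × ℤ))))
    refine hbig'.of_nonneg_of_le (fun PQ => norm_nonneg _) (fun PQ => ?_)
    obtain ⟨pq, hpq⟩ := PQ
    simp only [Finset.mem_singleton] at hpq
    set s : ℝ := ((pq.1:ℝ)^2 + (pq.2:ℝ)^2)^m with hs
    set t : ℝ := ‖a pq‖ with ht
    have ht0 : 0 ≤ t := norm_nonneg _
    have hs1 : (1:ℝ) ≤ s := one_le_pow₀ (one_le_sq_sum pq hpq)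
    have hs0 : 0 < s := by linarith
    show t ≤ s⁻¹ + s * t^2
    rcases le_or_gt t s⁻¹ with hcase | hcase
    · have : 0 ≤ s * t^2 := by positivity
      linarith
    · have h1 : 1 < s * t := by
        calc 1 = s * s⁻¹ := (mul_inv_cancel₀ hs0.ne').symm
          _ < s * t := by exact mul_lt_mul_of_pos_left hcase hs0
      have h2 : t < s * t^2 := by nlinarith
      have : 0 ≤ s⁻¹ := by positivity
      linarith
  have hsa' : Summable a := Summable.of_norm hsa
  set A : ℤ → ℤ → ℂ := fun p q => ∑' ln : ℤ × ℤ, a (p + 2*(N:ℤ)*ln.1, q + 2*(N:ℤ)*ln.2) with hAdef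
  set B : ℤ → ℤ → ℂ := fun p q => ∑' ln : ℤ × ℤ,
      (Real.exp (lam (p + 2*(N:ℤ)*ln.1) (q + 2*(N:ℤ)*ln.2) * τ) : ℂ)
        * a (p + 2*(N:ℤ)*ln.1, q + 2*(N:ℤ)*ln.2) with hBdef
  set D : ℤ → ℤ → ℂ := fun p q => B p q - (Real.exp (lam p q * τ) : ℂ) * A p q with hDdef
  have hugrid : ∀ j k : ℤ, u (x j) (x k)
      = ∑' PQ : ℤ × ℤ, a PQ * ee N (PQ.1 * j + PQ.2 * k) := by
    intro j k
    have hFu : Summable (fun PQ : ℤ × ℤ => a PQ * ee N (PQ.1 * j + PQ.2 * k)) := by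
      refine Summable.of_norm (hsa.congr fun PQ => ?_)
      rw [norm_mul, norm_ee, mul_one]
    rw [hu (x j) (x k), Summable.tsum_prod' hFu hFu.prod_factor]
    refine tsum_congr fun p => tsum_congr fun q => ?_
    rw [hee]
  have hFw : ∀ j k : ℤ, Summable (fun PQ : ℤ × ℤ =>
      (Real.exp (lam PQ.1 PQ.2 * τ) : ℂ) * a PQ * ee N (PQ.1 * j + PQ.2 * k)) := by
    intro j k
    refine Summable.of_norm ?_
    refine Summable.of_nonneg_of_le (fun PQ => norm_nonneg _) (fun PQ => ?_)
      (hsa.mul_left (Real.exp (τ / (4*δ))))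
    rw [norm_mul, norm_mul, norm_ee, mul_one, Complex.norm_real, Real.norm_eq_abs,
      abs_of_pos (Real.exp_pos _)]
    exact mul_le_mul_of_nonneg_right (hexp_le _ _) (norm_nonneg _)
  have hwgrid : ∀ j k : ℤ, w j k = ∑ p ∈ R, ∑ q ∈ R, B p q * ee N (p * j + q * k) := by
    intro j k
    have h1 : w j k = ∑' PQ : ℤ × ℤ,
        (Real.exp (lam PQ.1 PQ.2 * τ) : ℂ) * a PQ * ee N (PQ.1 * j + PQ.2 * k) := by
      rw [hw j k, Summable.tsum_prod' (hFw j k) (hFw j k).prod_factor]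
      refine tsum_congr fun p => tsum_congr fun q => ?_
      rw [hee]
    rw [h1, tsum_regroup N hN0 _ (hFw j k)]
    refine Finset.sum_congr rfl fun p _ => Finset.sum_congr rfl fun q _ => ?_
    have h2 : ∀ ln : ℤ × ℤ,
        (Real.exp (lam (p + 2*(N:ℤ)*ln.1) (q + 2*(N:ℤ)*ln.2) * τ) : ℂ)
          * a (p + 2*(N:ℤ)*ln.1, q + 2*(N:ℤ)*ln.2)
          * ee N ((p + 2*(N:ℤ)*ln.1) * j + (q + 2*(N:ℤ)*ln.2) * k)
        = ((Real.exp (lam (p + 2*(N:ℤ)*ln.1) (q + 2*(N:ℤ)*ln.2) * τ) : ℂ)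
          * a (p + 2*(N:ℤ)*ln.1, q + 2*(N:ℤ)*ln.2)) * ee N (p * j + q * k) := by
      intro ln
      rw [show (p + 2*(N:ℤ)*ln.1) * j + (q + 2*(N:ℤ)*ln.2) * k
          = (p * j + q * k) + 2*(N:ℤ)*(ln.1 * j + ln.2 * k) by ring, ee_period N hN0]
    rw [tsum_congr h2, tsum_mul_right]
  have hcne : ∀ r : ℤ, c r ≠ 0 := by
    intro r; rw [hc]; split_ifs <;> norm_num
  have hJC : ((2*N:ℕ):ℂ) ≠ 0 := Nat.cast_ne_zero.mpr (by omega)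
  have hutA : ∀ p q : ℤ, ut p q = (c p)⁻¹ * (c q)⁻¹ * A p q := by
    intro p q
    have hgsum : ∀ j k : ℤ, Summable (fun PQ : ℤ × ℤ =>
        a PQ * ee N ((PQ.1 - p) * j + (PQ.2 - q) * k)) := fun j k =>
      Summable.of_norm (hsa.congr fun PQ => by rw [norm_mul, norm_ee, mul_one])
    have hik : ∀ j k : ℤ, u (x j) (x k) * Complex.exp (-(Complex.I * Real.pi
          * ((p:ℂ) * ((x j:ℝ):ℂ) + (q:ℂ) * ((x k:ℝ):ℂ)) / L))
        = ∑' PQ : ℤ × ℤ, a PQ * ee N ((PQ.1 - p) * j + (PQ.2 - q) * k) := by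
      intro j k
      rw [hugrid j k, heeneg, ← tsum_mul_right]
      refine tsum_congr fun PQ => ?_
      rw [mul_assoc, ← ee_add]
      congr 2
      ring
    have hswap : ∑ j ∈ Finset.Icc (1:ℤ) (2*(N:ℤ)), ∑ k ∈ Finset.Icc (1:ℤ) (2*(N:ℤ)),
        (∑' PQ : ℤ × ℤ, a PQ * ee N ((PQ.1 - p) * j + (PQ.2 - q) * k))
      = ∑' PQ : ℤ × ℤ, ∑ j ∈ Finset.Icc (1:ℤ) (2*(N:ℤ)), ∑ k ∈ Finset.Icc (1:ℤ) (2*(N:ℤ)),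
          a PQ * ee N ((PQ.1 - p) * j + (PQ.2 - q) * k) := by
      rw [Finset.sum_congr rfl (fun j _ => (Summable.tsum_finsetSum (fun k _ => hgsum j k)).symm)]
      exact (Summable.tsum_finsetSum (fun j _ => summable_sum (fun k _ => hgsum j k))).symm
    have heval : ∀ PQ : ℤ × ℤ, ∑ j ∈ Finset.Icc (1:ℤ) (2*(N:ℤ)),
          ∑ k ∈ Finset.Icc (1:ℤ) (2*(N:ℤ)), a PQ * ee N ((PQ.1 - p) * j + (PQ.2 - q) * k)
        = a PQ * ((if ((2*N:ℕ):ℤ) ∣ (PQ.1 - p) then ((2*N:ℕ):ℂ) else 0)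
            * (if ((2*N:ℕ):ℤ) ∣ (PQ.2 - q) then ((2*N:ℕ):ℂ) else 0)) := by
      intro PQ
      rw [hJcast]
      rw [Finset.sum_congr rfl (fun j _ => Finset.sum_congr rfl (fun k _ => by
        rw [ee_add N ((PQ.1 - p) * j) ((PQ.2 - q) * k)]))]
      simp only [← Finset.mul_sum]
      rw [← Finset.sum_mul, ee_orth N hN0 (PQ.1 - p), ee_orth N hN0 (PQ.2 - q)]
    have hψinj : Function.Injective
        (fun ln : ℤ × ℤ => ((p + 2*(N:ℤ)*ln.1, q + 2*(N:ℤ)*ln.2) : ℤ × ℤ)) := by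
      intro y z hyz
      simp only [Prod.mk.injEq] at hyz
      have h2N : (2*(N:ℤ)) ≠ 0 := by omega
      have h1 : 2*(N:ℤ)*y.1 = 2*(N:ℤ)*z.1 := by omega
      have h2 : 2*(N:ℤ)*y.2 = 2*(N:ℤ)*z.2 := by omega
      exact Prod.ext (mul_left_cancel₀ h2N h1) (mul_left_cancel₀ h2N h2)
    have hΦ : (∑' PQ : ℤ × ℤ, a PQ * ((if ((2*N:ℕ):ℤ) ∣ (PQ.1 - p) then ((2*N:ℕ):ℂ) else 0)
            * (if ((2*N:ℕ):ℤ) ∣ (PQ.2 - q) then ((2*N:ℕ):ℂ) else 0)))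
        = ((2*N:ℕ):ℂ)^2 * A p q := by
      rw [← Function.Injective.tsum_eq hψinj (f := fun PQ : ℤ × ℤ =>
        a PQ * ((if ((2*N:ℕ):ℤ) ∣ (PQ.1 - p) then ((2*N:ℕ):ℂ) else 0)
            * (if ((2*N:ℕ):ℤ) ∣ (PQ.2 - q) then ((2*N:ℕ):ℂ) else 0))) ?_]
      · have : ∀ ln : ℤ × ℤ, a (p + 2*(N:ℤ)*ln.1, q + 2*(N:ℤ)*ln.2) *
            ((if ((2*N:ℕ):ℤ) ∣ ((p + 2*(N:ℤ)*ln.1) - p) then ((2*N:ℕ):ℂ) else 0)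
              * (if ((2*N:ℕ):ℤ) ∣ ((q + 2*(N:ℤ)*ln.2) - q) then ((2*N:ℕ):ℂ) else 0))
            = a (p + 2*(N:ℤ)*ln.1, q + 2*(N:ℤ)*ln.2) * (((2*N:ℕ):ℂ)^2) := by
          intro ln
          rw [if_pos ⟨ln.1, by push_cast; ring⟩, if_pos ⟨ln.2, by push_cast; ring⟩]
          ring
        rw [tsum_congr this, tsum_mul_right]
        rw [hAdef]
        ring
      · intro PQ hPQ
        simp only [Function.mem_support] at hPQ
        by_cases h1 : ((2*N:ℕ):ℤ) ∣ (PQ.1 - p)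
        · by_cases h2 : ((2*N:ℕ):ℤ) ∣ (PQ.2 - q)
          · obtain ⟨l, hl⟩ := h1
            obtain ⟨n, hn⟩ := h2
            obtain ⟨P, Q⟩ := PQ
            refine ⟨(l, n), ?_⟩
            simp only [Prod.mk.injEq]
            push_cast at hl hn
            constructor
            · linarith
            · linarith
          · exact absurd (by rw [if_neg h2]; ring) hPQ
        · exact absurd (by rw [if_neg h1]; ring) hPQ
    rw [hut p q]
    rw [Finset.sum_congr rfl (fun j _ => Finset.sum_congr rfl (fun k _ => hik j k))]
    rw [hswap, tsum_congr heval, hΦ]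
    field_simp [hcne p, hcne q, hJC]
  have hlamsymp : ∀ q : ℤ, lam (-(N:ℤ)) q = lam (N:ℤ) q := by
    intro q; rw [hlam, hlam]; push_cast; ring_nf
  have hlamsymq : ∀ p : ℤ, lam p (-(N:ℤ)) = lam p (N:ℤ) := by
    intro p; rw [hlam, hlam]; push_cast; ring_nf
  have hAsymp : ∀ q : ℤ, A (-(N:ℤ)) q = A (N:ℤ) q := by
    intro q
    have key : (∑' ln : ℤ × ℤ, a (-(N:ℤ) + 2*(N:ℤ)*ln.1, q + 2*(N:ℤ)*ln.2))
        = ∑' ln : ℤ × ℤ, a ((N:ℤ) + 2*(N:ℤ)*ln.1, q + 2*(N:ℤ)*ln.2) := by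
      rw [← Equiv.tsum_eq (Equiv.prodCongr (Equiv.addRight (1:ℤ)) (Equiv.refl ℤ))
        (fun ln : ℤ × ℤ => a (-(N:ℤ) + 2*(N:ℤ)*ln.1, q + 2*(N:ℤ)*ln.2))]
      refine tsum_congr fun ln => ?_
      simp only [Equiv.prodCongr_apply, Equiv.coe_addRight, Equiv.refl_apply, Prod.map]
      rw [show -(N:ℤ) + 2*(N:ℤ)*(ln.1+1) = (N:ℤ) + 2*(N:ℤ)*ln.1 by ring]
    rw [hAdef]
    exact key
  have hAsymq : ∀ p : ℤ, A p (-(N:ℤ)) = A p (N:ℤ) := by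
    intro p
    have key : (∑' ln : ℤ × ℤ, a (p + 2*(N:ℤ)*ln.1, -(N:ℤ) + 2*(N:ℤ)*ln.2))
        = ∑' ln : ℤ × ℤ, a (p + 2*(N:ℤ)*ln.1, (N:ℤ) + 2*(N:ℤ)*ln.2) := by
      rw [← Equiv.tsum_eq (Equiv.prodCongr (Equiv.refl ℤ) (Equiv.addRight (1:ℤ)))
        (fun ln : ℤ × ℤ => a (p + 2*(N:ℤ)*ln.1, -(N:ℤ) + 2*(N:ℤ)*ln.2))]
      refine tsum_congr fun ln => ?_
      simp only [Equiv.prodCongr_apply, Equiv.coe_addRight, Equiv.refl_apply, Prod.map]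
      rw [show -(N:ℤ) + 2*(N:ℤ)*(ln.2+1) = (N:ℤ) + 2*(N:ℤ)*ln.2 by ring]
    rw [hAdef]
    exact key
  have hwtgrid : ∀ j k : ℤ, wt j k
      = ∑ p ∈ R, ∑ q ∈ R, (Real.exp (lam p q * τ) : ℂ) * A p q * ee N (p * j + q * k) := by
    intro j k
    have hstep : wt j k = ∑ p ∈ Finset.Icc (-(N:ℤ)) (N:ℤ), (c p)⁻¹ *
        ∑ q ∈ Finset.Icc (-(N:ℤ)) (N:ℤ), (c q)⁻¹ *
          ((Real.exp (lam p q * τ) : ℂ) * A p q * ee N (p * j + q * k)) := by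
      rw [hwt j k]
      refine Finset.sum_congr rfl fun p _ => ?_
      rw [Finset.mul_sum]
      refine Finset.sum_congr rfl fun q _ => ?_
      rw [hutA p q, hee]
      ring
    rw [hstep]
    have hsymG : ∀ p : ℤ, (Real.exp (lam p (-(N:ℤ)) * τ) : ℂ) * A p (-(N:ℤ))
          * ee N (p * j + (-(N:ℤ)) * k)
        = (Real.exp (lam p (N:ℤ) * τ) : ℂ) * A p (N:ℤ) * ee N (p * j + (N:ℤ) * k) := by
      intro p
      rw [hlamsymq p, hAsymq p,
        show p * j + (-(N:ℤ)) * k = (p * j + (N:ℤ) * k) + 2*(N:ℤ)*(-k) by ring,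
        ee_period N hN0]
    have hinner : ∀ p : ℤ, ∑ q ∈ Finset.Icc (-(N:ℤ)) (N:ℤ), (c q)⁻¹ *
          ((Real.exp (lam p q * τ) : ℂ) * A p q * ee N (p * j + q * k))
        = ∑ q ∈ R, (Real.exp (lam p q * τ) : ℂ) * A p q * ee N (p * j + q * k) :=
      fun p => collapse_sum N hN c hc _ (hsymG p)
    rw [Finset.sum_congr rfl (fun p _ => by rw [hinner p])]
    refine collapse_sum N hN c hc
      (fun p => ∑ q ∈ R, (Real.exp (lam p q * τ) : ℂ) * A p q * ee N (p * j + q * k)) ?_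
    refine Finset.sum_congr rfl fun q _ => ?_
    rw [hlamsymp q, hAsymp q,
      show (-(N:ℤ)) * j + q * k = ((N:ℤ) * j + q * k) + 2*(N:ℤ)*(-j) by ring,
      ee_period N hN0]
  have hdiff : ∀ j k : ℤ, w j k - wt j k = ∑ p ∈ R, ∑ q ∈ R, D p q * ee N (p * j + q * k) := by
    intro j k
    rw [hwgrid, hwtgrid, ← Finset.sum_sub_distrib]
    refine Finset.sum_congr rfl fun p _ => ?_
    rw [← Finset.sum_sub_distrib]
    refine Finset.sum_congr rfl fun q _ => ?_
    rw [hDdef]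
    ring
  have hpar : ∑ j ∈ Finset.Icc (1:ℤ) (2*(N:ℤ)), ∑ k ∈ Finset.Icc (1:ℤ) (2*(N:ℤ)),
      ‖w j k - wt j k‖^2 = ((2*N:ℕ):ℝ)^2 * ∑ p ∈ R, ∑ q ∈ R, ‖D p q‖^2 := by
    rw [hJcast, ← parseval N hN0 D]
    refine Finset.sum_congr rfl fun j _ => Finset.sum_congr rfl fun k _ => ?_
    rw [hdiff j k]
  set M : ℝ := ∑' pq : ℤ × ℤ, ((pq.1 : ℝ) ^ 2 + (pq.2 : ℝ) ^ 2) ^ m * ‖a pq‖ ^ 2 with hMdef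
  have hM0 : 0 ≤ M := tsum_nonneg fun pq => by positivity
  set T : ℤ → ℤ → ℝ := fun p q => ∑' ln : ℤ × ℤ,
      (((p + 2*(N:ℤ)*ln.1 : ℤ):ℝ)^2 + ((q + 2*(N:ℤ)*ln.2 : ℤ):ℝ)^2)^m
        * ‖a (p + 2*(N:ℤ)*ln.1, q + 2*(N:ℤ)*ln.2)‖^2 with hTdef
  have hsum_T : ∑ p ∈ R, ∑ q ∈ R, T p q = M := by
    rw [hMdef, tsum_regroup N hN0 (fun pq : ℤ × ℤ =>
      ((pq.1 : ℝ) ^ 2 + (pq.2 : ℝ) ^ 2) ^ m * ‖a pq‖ ^ 2) ha]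
  have hT0 : ∀ p q : ℤ, 0 ≤ T p q := fun p q => tsum_nonneg fun ln => by positivity
  have hDbound : ∀ p ∈ R, ∀ q ∈ R, ‖D p q‖^2
      ≤ 4 * Real.exp (τ/(2*δ)) * ((N:ℝ)^(2*m))⁻¹ * K * T p q := by
    intro p hp q hq
    rw [hRdef, Finset.mem_Ico] at hp hq
    set ψ : ℤ × ℤ → ℤ × ℤ := fun ln => (p + 2*(N:ℤ)*ln.1, q + 2*(N:ℤ)*ln.2) with hψdef
    have hψinj : Function.Injective ψ := by
      intro y z hyz
      rw [hψdef] at hyz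
      simp only [Prod.mk.injEq] at hyz
      have h2N : (2*(N:ℤ)) ≠ 0 := by omega
      have h1 : 2*(N:ℤ)*y.1 = 2*(N:ℤ)*z.1 := by omega
      have h2 : 2*(N:ℤ)*y.2 = 2*(N:ℤ)*z.2 := by omega
      exact Prod.ext (mul_left_cancel₀ h2N h1) (mul_left_cancel₀ h2N h2)
    set σa : ℤ × ℤ → ℝ := fun ln =>
      (((p + 2*(N:ℤ)*ln.1 : ℤ)):ℝ)^2 + (((q + 2*(N:ℤ)*ln.2 : ℤ)):ℝ)^2 with hσdef
    have hσa0 : ∀ ln, 0 ≤ σa ln := fun ln => by simp only [hσdef]; positivity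
    have hσalb : ∀ ln : ℤ × ℤ, (N:ℝ)^2 * ((ln.1:ℝ)^2 + (ln.2:ℝ)^2) ≤ σa ln := by
      intro ln
      simp only [hσdef]
      have h1 := alias_sq_lb N p ln.1 (by omega) (by omega)
      have h2 := alias_sq_lb N q ln.2 (by omega) (by omega)
      have h1' : ((N:ℝ))^2 * (ln.1:ℝ)^2 ≤ (((p + 2*(N:ℤ)*ln.1 : ℤ)):ℝ)^2 := by
        exact_mod_cast (by exact_mod_cast h1 : ((N:ℤ)^2 * ln.1^2 : ℤ) ≤ ((p + 2*(N:ℤ)*ln.1)^2 : ℤ))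
      have h2' : ((N:ℝ))^2 * (ln.2:ℝ)^2 ≤ (((q + 2*(N:ℤ)*ln.2 : ℤ)):ℝ)^2 := by
        exact_mod_cast (by exact_mod_cast h2 : ((N:ℤ)^2 * ln.2^2 : ℤ) ≤ ((q + 2*(N:ℤ)*ln.2)^2 : ℤ))
      nlinarith
    have hσapos : ∀ ln : ℤ × ℤ, ln ≠ (0,0) → 0 < σa ln := by
      intro ln hln
      have := hσalb ln
      have h1 := one_le_sq_sum ln hln
      nlinarith
    set g0 : ℤ × ℤ → ℝ := fun ln => if ln = (0,0) then 0 else ((σa ln)^m)⁻¹ with hg0def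
    have hg00 : ∀ ln, 0 ≤ g0 ln := by
      intro ln; simp only [hg0def]
      by_cases hln : ln = (0,0)
      · simp [hln]
      · rw [if_neg hln]; positivity
    have hg0le : ∀ ln : ℤ × ℤ, g0 ln
        ≤ ((N:ℝ)^(2*m))⁻¹ * ((((ln.1:ℝ)^2 + (ln.2:ℝ)^2))^m)⁻¹ := by
      intro ln
      simp only [hg0def]
      by_cases hln : ln = (0,0)
      · rw [if_pos hln, hln]
        norm_num [zero_pow (show m ≠ 0 by omega)]
      · rw [if_neg hln]
        have h1 : (0:ℝ) < (N:ℝ)^2 * ((ln.1:ℝ)^2 + (ln.2:ℝ)^2) := by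
          have := one_le_sq_sum ln hln
          nlinarith
      
        have h2 : ((N:ℝ)^2 * ((ln.1:ℝ)^2 + (ln.2:ℝ)^2))^m ≤ (σa ln)^m :=
          pow_le_pow_left₀ h1.le (hσalb ln) m
        have h3 : (0:ℝ) < ((N:ℝ)^2 * ((ln.1:ℝ)^2 + (ln.2:ℝ)^2))^m := by positivity
        calc ((σa ln)^m)⁻¹ ≤ (((N:ℝ)^2 * ((ln.1:ℝ)^2 + (ln.2:ℝ)^2))^m)⁻¹ :=
              inv_anti₀ h3 h2
          _ = ((N:ℝ)^(2*m))⁻¹ * ((((ln.1:ℝ)^2 + (ln.2:ℝ)^2))^m)⁻¹ := by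
              rw [mul_pow, ← pow_mul, mul_inv]
    have hg0sum : Summable g0 := by
      refine Summable.of_nonneg_of_le hg00 hg0le ?_
      exact (summable_k0 m hm).mul_left _
    have hTsum : Summable (fun ln : ℤ × ℤ => (σa ln)^m * ‖a (ψ ln)‖^2) := by
      have := ha.comp_injective hψinj
      exact this.congr fun ln => rfl
    have haψ : Summable (fun ln : ℤ × ℤ => ‖a (ψ ln)‖) := by
      have := hsa.comp_injective hψinj
      exact this.congr fun ln => rfl
    -- D as a single tsum
    have hBsum : Summable (fun ln : ℤ × ℤ =>
        (Real.exp (lam (p + 2*(N:ℤ)*ln.1) (q + 2*(N:ℤ)*ln.2) * τ) : ℂ) * a (ψ ln)) := by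
      refine Summable.of_norm ?_
      refine Summable.of_nonneg_of_le (fun ln => norm_nonneg _) (fun ln => ?_)
        (haψ.mul_left (Real.exp (τ / (4*δ))))
      rw [norm_mul, Complex.norm_real, Real.norm_eq_abs, abs_of_pos (Real.exp_pos _)]
      exact mul_le_mul_of_nonneg_right (hexp_le _ _) (norm_nonneg _)
    have hAsum : Summable (fun ln : ℤ × ℤ => a (ψ ln)) := Summable.of_norm haψ
    have hDeq : D p q = ∑' ln : ℤ × ℤ,
        ((Real.exp (lam (p + 2*(N:ℤ)*ln.1) (q + 2*(N:ℤ)*ln.2) * τ) : ℂ)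
          - (Real.exp (lam p q * τ) : ℂ)) * a (ψ ln) := by
      simp only [hDdef]
      have h1 : (Real.exp (lam p q * τ) : ℂ) * A p q
          = ∑' ln : ℤ × ℤ, (Real.exp (lam p q * τ) : ℂ) * a (ψ ln) := by
        simp only [hAdef]; rw [← tsum_mul_left]
      rw [h1]
      simp only [hBdef]
      rw [← Summable.tsum_sub hBsum (hAsum.mul_left _)]
      refine tsum_congr fun ln => ?_
      ring
    -- pointwise bound
    set uu : ℤ × ℤ → ℝ := fun ln => Real.sqrt (g0 ln) with huudef
    set vv : ℤ × ℤ → ℝ := fun ln => Real.sqrt ((σa ln)^m) * ‖a (ψ ln)‖ with hvvdef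
    have huu0 : ∀ ln, 0 ≤ uu ln := fun ln => Real.sqrt_nonneg _
    have hvv0 : ∀ ln, 0 ≤ vv ln := fun ln => mul_nonneg (Real.sqrt_nonneg _) (norm_nonneg _)
    have hptwise : ∀ ln : ℤ × ℤ,
        ‖((Real.exp (lam (p + 2*(N:ℤ)*ln.1) (q + 2*(N:ℤ)*ln.2) * τ) : ℂ)
          - (Real.exp (lam p q * τ) : ℂ)) * a (ψ ln)‖
        ≤ 2 * Real.exp (τ / (4*δ)) * (uu ln * vv ln) := by
      intro ln
      by_cases hln : ln = (0,0)
      · subst hln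
        simp only [Prod.fst, Prod.snd]
        norm_num
        positivity
      · have huv : uu ln * vv ln = ‖a (ψ ln)‖ := by
          simp only [huudef]; simp only [hvvdef]; rw [hg0def]
          simp only [if_neg hln]
          rw [Real.sqrt_inv, ← mul_assoc, inv_mul_cancel₀, one_mul]
          refine (Real.sqrt_pos.mpr ?_).ne'
          exact pow_pos (hσapos ln hln) m
        rw [huv, norm_mul, ← Complex.ofReal_sub, Complex.norm_real, Real.norm_eq_abs]
        refine mul_le_mul_of_nonneg_right ?_ (norm_nonneg _)
        rw [sub_eq_add_neg]
        refine (abs_add_le _ _).trans ?_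
        rw [abs_neg, abs_of_pos (Real.exp_pos _), abs_of_pos (Real.exp_pos _)]
        have b1 := hexp_le (p + 2*(N:ℤ)*ln.1) (q + 2*(N:ℤ)*ln.2)
        have b2 := hexp_le p q
        linarith
    have huvsum : Summable (fun ln : ℤ × ℤ => uu ln * vv ln) := by
      refine Summable.of_nonneg_of_le (fun ln => mul_nonneg (huu0 ln) (hvv0 ln))
        (fun ln => ?_) ((hg0sum.add hTsum).mul_left (1/2))
      have h1 : uu ln ^ 2 = g0 ln := Real.sq_sqrt (hg00 ln)
      have h2 : vv ln ^ 2 = (σa ln)^m * ‖a (ψ ln)‖^2 := by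
        simp only [hvvdef]
        rw [mul_pow, Real.sq_sqrt (by positivity : (0:ℝ) ≤ (σa ln)^m)]
      nlinarith [sq_nonneg (uu ln - vv ln), huu0 ln, hvv0 ln]
    have hnormsum : Summable (fun ln : ℤ × ℤ =>
        ‖((Real.exp (lam (p + 2*(N:ℤ)*ln.1) (q + 2*(N:ℤ)*ln.2) * τ) : ℂ)
          - (Real.exp (lam p q * τ) : ℂ)) * a (ψ ln)‖) := by
      refine Summable.of_nonneg_of_le (fun ln => norm_nonneg _) hptwise
        (huvsum.mul_left _)
    have hDnorm : ‖D p q‖ ≤ 2 * Real.exp (τ / (4*δ)) * ∑' ln : ℤ × ℤ, uu ln * vv ln := by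
      rw [hDeq]
      refine (norm_tsum_le_tsum_norm hnormsum).trans ?_
      rw [← tsum_mul_left]
      exact Summable.tsum_le_tsum hptwise hnormsum (huvsum.mul_left _)
    have hCS : (∑' ln : ℤ × ℤ, uu ln * vv ln)^2 ≤ (∑' ln, (uu ln)^2) * (∑' ln, (vv ln)^2) := by
      refine tsum_cauchy_schwarz uu vv huu0 hvv0 ?_ ?_
      · exact hg0sum.congr fun ln => (Real.sq_sqrt (hg00 ln)).symm
      · refine hTsum.congr fun ln => ?_
        simp only [hvvdef]; rw [mul_pow, Real.sq_sqrt (by positivity : (0:ℝ) ≤ (σa ln)^m)]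
    have huusq : (∑' ln : ℤ × ℤ, (uu ln)^2) = ∑' ln, g0 ln :=
      tsum_congr fun ln => Real.sq_sqrt (hg00 ln)
    have hvvsq : (∑' ln : ℤ × ℤ, (vv ln)^2) = T p q := by
      simp only [hTdef]
      refine tsum_congr fun ln => ?_
      simp only [hvvdef]; rw [mul_pow, Real.sq_sqrt (by positivity : (0:ℝ) ≤ (σa ln)^m)]
    have hg0tsum : (∑' ln, g0 ln) ≤ ((N:ℝ)^(2*m))⁻¹ * K := by
      rw [hKdef, ← tsum_mul_left]
      exact Summable.tsum_le_tsum hg0le hg0sum ((summable_k0 m hm).mul_left _)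
    have hexp2 : (Real.exp (τ / (4*δ)))^2 = Real.exp (τ / (2*δ)) := by
      rw [sq, ← Real.exp_add]
      congr 1
      field_simp
      ring
    have hDfin : ‖D p q‖^2 ≤ 4 * Real.exp (τ / (2*δ)) * ((∑' ln, g0 ln) * T p q) := by
      calc ‖D p q‖^2 ≤ (2 * Real.exp (τ / (4*δ)) * ∑' ln : ℤ × ℤ, uu ln * vv ln)^2 := by
            refine pow_le_pow_left₀ (norm_nonneg _) hDnorm 2
        _ = 4 * (Real.exp (τ / (4*δ)))^2 * (∑' ln : ℤ × ℤ, uu ln * vv ln)^2 := by ring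
        _ ≤ 4 * (Real.exp (τ / (4*δ)))^2 * ((∑' ln, g0 ln) * T p q) := by
            refine mul_le_mul_of_nonneg_left ?_ (by positivity)
            rw [← huusq, ← hvvsq]
            exact hCS
        _ = 4 * Real.exp (τ / (2*δ)) * ((∑' ln, g0 ln) * T p q) := by rw [hexp2]
    refine hDfin.trans ?_
    have hg0n : 0 ≤ ∑' ln, g0 ln := tsum_nonneg hg00
    calc 4 * Real.exp (τ / (2*δ)) * ((∑' ln, g0 ln) * T p q)
        ≤ 4 * Real.exp (τ / (2*δ)) * ((((N:ℝ)^(2*m))⁻¹ * K) * T p q) := by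
          refine mul_le_mul_of_nonneg_left
            (mul_le_mul_of_nonneg_right hg0tsum (hT0 p q)) (by positivity)
      _ = 4 * Real.exp (τ/(2*δ)) * ((N:ℝ)^(2*m))⁻¹ * K * T p q := by ring
  -- final assembly
  have hsumD : ∑ p ∈ R, ∑ q ∈ R, ‖D p q‖^2
      ≤ 4 * Real.exp (τ/(2*δ)) * ((N:ℝ)^(2*m))⁻¹ * K * M := by
    calc ∑ p ∈ R, ∑ q ∈ R, ‖D p q‖^2
        ≤ ∑ p ∈ R, ∑ q ∈ R, 4 * Real.exp (τ/(2*δ)) * ((N:ℝ)^(2*m))⁻¹ * K * T p q :=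
          Finset.sum_le_sum fun p hp => Finset.sum_le_sum fun q hq => hDbound p hp q hq
      _ = 4 * Real.exp (τ/(2*δ)) * ((N:ℝ)^(2*m))⁻¹ * K * ∑ p ∈ R, ∑ q ∈ R, T p q := by
          rw [Finset.mul_sum]
          refine Finset.sum_congr rfl fun p _ => ?_
          rw [Finset.mul_sum]
      _ = _ := by rw [hsum_T]
  have hgrid_bound : h ^ 2 * ∑ j ∈ Finset.Icc (1:ℤ) (2*(N:ℤ)), ∑ k ∈ Finset.Icc (1:ℤ) (2*(N:ℤ)),
      ‖w j k - wt j k‖ ^ 2 ≤ 4*L^2 * (4 * Real.exp (τ/(2*δ)) * ((N:ℝ)^(2*m))⁻¹ * K * M) := by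
    rw [hpar, ← mul_assoc]
    have hcoef : h ^ 2 * ((2*N:ℕ):ℝ)^2 = 4*L^2 := by
      rw [hh]
      push_cast
      field_simp
      ring
    rw [hcoef]
    refine mul_le_mul_of_nonneg_left hsumD (by positivity)
  refine hgrid_bound.trans ?_
  have hCsq : (4 * L * Real.sqrt (K + 1))^2 = 16 * L^2 * (K+1) := by
    rw [mul_pow, mul_pow, Real.sq_sqrt (by linarith)]
    ring
  rw [hCsq]
  rw [div_eq_mul_inv]
  calc 4*L^2 * (4 * Real.exp (τ/(2*δ)) * ((N:ℝ)^(2*m))⁻¹ * K * M)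
      = 16 * L^2 * K * Real.exp (τ/(2*δ)) * M * ((N:ℝ)^(2*m))⁻¹ := by ring
    _ ≤ 16 * L^2 * (K+1) * Real.exp (τ/(2*δ)) * M * ((N:ℝ)^(2*m))⁻¹ := by
        have h1 : 16 * L^2 * K ≤ 16 * L^2 * (K+1) := by nlinarith
        refine mul_le_mul_of_nonneg_right (mul_le_mul_of_nonneg_right
          (mul_le_mul_of_nonneg_right h1 (Real.exp_pos _).le) hM0) (by positivity)
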